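/- The derivation ∂ is locally nilpotent: for every element a of the monoid algebra K[S] there exists n ∈ ℕ such that ∂^n(a) = 0. -/

import Mathlib

open AddMonoidAlgebra

/-- The derivation `∂` attached to the Demazure root `μ` is locally nilpotent. -/
theorem stmt1 {K M : Type*} [Field K] [CharZero K] [AddCommGroup M]
    [Module.Free ℤ M] [Module.Finite ℤ M]
    (S : AddSubmonoid M) (ρ : M →+ ℤ) (μ : M)
    (h1 : ∀ l ∈ S, 0 ≤ ρ l) (h2 : ρ μ = -1)
    (h3 : ∀ l ∈ S, 0 < ρ l → l + μ ∈ S)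
    (D : Derivation K (AddMonoidAlgebra K S) (AddMonoidAlgebra K S))
    (hD : ∀ l : S,
      (∀ h : 0 < ρ (l : M),
        D (of' K S l) = ((ρ (l : M) : K)) • of' K S (⟨(l : M) + μ, h3 l l.2 h⟩ : S))
      ∧ (ρ (l : M) = 0 → D (of' K S l) = 0)) :
    ∀ a : AddMonoidAlgebra K S, ∃ n : ℕ, (D.toLinearMap ^ n) a = 0 := by
  -- key lemma: monomials are killed
  have key : ∀ (k : ℕ) (l : S), ρ (l : M) < k → (D.toLinearMap ^ k) (of' K S l) = 0 := by
    intro k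
    induction k with
    | zero =>
      intro l hl
      exact absurd (h1 l l.2) (by omega)
    | succ k ih =>
      intro l hl
      rw [pow_succ, Module.End.mul_apply]
      rcases eq_or_lt_of_le (h1 l l.2) with h0 | hpos
      · rw [show (D.toLinearMap) (of' K S l) = D (of' K S l) from rfl,
          (hD l).2 h0.symm, map_zero]
      · rw [show (D.toLinearMap) (of' K S l) = D (of' K S l) from rfl,
          (hD l).1 hpos, map_smul,
          ih ⟨(l : M) + μ, h3 l l.2 hpos⟩ (by simp [h2]; omega), smul_zero]
  intro a
  induction a using AddMonoidAlgebra.induction with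
  | zero => exact ⟨0, rfl⟩
  | single_add l c f _ _ ihf =>
    obtain ⟨n, hn⟩ := ihf
    refine ⟨max ((ρ (l : M)).toNat + 1) n, ?_⟩
    rw [map_add]
    have h1' : (D.toLinearMap ^ max ((ρ (l : M)).toNat + 1) n) (AddMonoidAlgebra.single l c) = 0 := by
      have : AddMonoidAlgebra.single l c = c • of' K S l := by
        rw [of'_apply, AddMonoidAlgebra.smul_single', mul_one]
      rw [this, map_smul]
      obtain ⟨m, hm⟩ := Nat.exists_eq_add_of_le (le_max_left ((ρ (l : M)).toNat + 1) n)
      rw [hm, add_comm, pow_add, Module.End.mul_apply,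
        key _ l (by have := h1 l l.2; omega), map_zero, smul_zero]
    have h2' : (D.toLinearMap ^ max ((ρ (l : M)).toNat + 1) n) f = 0 := by
      obtain ⟨m, hm⟩ := Nat.exists_eq_add_of_le (le_max_right ((ρ (l : M)).toNat + 1) n)
      rw [hm, add_comm, pow_add, Module.End.mul_apply, hn, map_zero]
    rw [h1', h2', add_zero]
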